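/- In the weighted-cycle lower-bound graph G_{x,y}, every simple cycle whose total edge weight equals 2k³ contains exactly two input-dependent edges, namely exactly one edge with one endpoint in A_1 and the other endpoint in A_2, and exactly one edge with one endpoint in B_1 and the other endpoint in B_2. -/
import Mathlib


/-- Vertices of the weighted-cycle lower-bound graph.  The side `s : Bool`
distinguishes the `a`'s (`false`) from the `b`'s (`true`), and `ℓ : Bool`
distinguishes index `1` (`false`) from index `2` (`true`).  So
`node false false i = a_1^i`, `node true true i = b_2^i`, and `c s ℓ` is the
center node `c_S` of the corresponding set `S ∈ {A_1, A_2, B_1, B_2}`. -/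
inductive WCVertex (k : ℕ) where
  | node (s ℓ : Bool) (i : Fin k)
  | c (s ℓ : Bool)
deriving DecidableEq

/-- Base relation generating the edges of the weighted-cycle lower-bound graph
`G_{x,y}`: each center `c_S` joined to every node of `S`; the edges
`(c_{A_1}, c_{B_1})` and `(c_{A_2}, c_{B_2})`; the input edge `(a_1^i, a_2^j)`
present iff `x i j = 1` and `(b_1^i, b_2^j)` present iff `y i j = 1`. -/
def wcRel (k : ℕ) (x y : Fin k → Fin k → Bool) (u v : WCVertex k) : Prop :=
  (∃ (s ℓ : Bool) (i : Fin k), u = WCVertex.c s ℓ ∧ v = WCVertex.node s ℓ i) ∨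
  (∃ ℓ : Bool, u = WCVertex.c false ℓ ∧ v = WCVertex.c true ℓ) ∨
  (∃ i j : Fin k, x i j = true ∧
    u = WCVertex.node false false i ∧ v = WCVertex.node false true j) ∨
  (∃ i j : Fin k, y i j = true ∧
    u = WCVertex.node true false i ∧ v = WCVertex.node true true j)

/-- The weighted-cycle lower-bound graph `G_{x,y}`. -/
def wcGraph (k : ℕ) (x y : Fin k → Fin k → Bool) : SimpleGraph (WCVertex k) :=
  SimpleGraph.fromRel (wcRel k x y)

/-- One-directional weight assignment: `k³ + ki + j` on `(a_1^i, a_2^j)`,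
`k³ − (ki + j)` on `(b_1^i, b_2^j)`, and `0` on every other pair. -/
def wcW0 (k : ℕ) : WCVertex k → WCVertex k → ℕ
  | .node false false i, .node false true j => k ^ 3 + k * i.val + j.val
  | .node true false i, .node true true j => k ^ 3 - (k * i.val + j.val)
  | _, _ => 0

/-- The (symmetric) edge-weight function of the weighted-cycle lower-bound graph. -/
def wcW (k : ℕ) (u v : WCVertex k) : ℕ := wcW0 k u v + wcW0 k v u

/-- The total weight of a walk: the sum of the weights of its edges
(one per dart of the walk). -/
def walkWeight {k : ℕ} {x y : Fin k → Fin k → Bool} {u v : WCVertex k}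
    (p : (wcGraph k x y).Walk u v) : ℕ :=
  (p.darts.map (fun d => wcW k d.fst d.snd)).sum

/-- Whether a dart is an input-dependent edge with one endpoint in `A_1` and the
other in `A_2` (side `s = false`), resp. in `B_1` and `B_2` (side `s = true`). -/
def isInputDart (k : ℕ) {x y : Fin k → Fin k → Bool} (s : Bool)
    (d : (wcGraph k x y).Dart) : Bool :=
  match d.fst, d.snd with
  | .node s₁ ℓ₁ _, .node s₂ ℓ₂ _ => s₁ == s && s₂ == s && ℓ₁ != ℓ₂
  | _, _ => false

lemma wc_fin_bound {k : ℕ} (hk : 3 ≤ k) (i j : Fin k) :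
    k * i.val + j.val + 1 ≤ k ^ 2 := by
  have e1 : k * (i.val + 1) ≤ k * k := Nat.mul_le_mul_left k i.isLt
  have e2 : k * (i.val + 1) = k * i.val + k := by ring
  have e3 : k ^ 2 = k * k := by ring
  have := j.isLt
  omega

lemma wc_dart_class {k : ℕ} (hk : 3 ≤ k) {x y : Fin k → Fin k → Bool}
    (d : (wcGraph k x y).Dart) :
    (isInputDart k false d = true ∧ isInputDart k true d = false ∧
      k ^ 3 ≤ wcW k d.fst d.snd ∧ wcW k d.fst d.snd + 1 ≤ k ^ 3 + k ^ 2 ∧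
      (wcW k d.fst d.snd = k ^ 3 →
        d.edge = s(WCVertex.node false false (⟨0, by omega⟩ : Fin k),
                   WCVertex.node false true (⟨0, by omega⟩ : Fin k)))) ∨
    (isInputDart k true d = true ∧ isInputDart k false d = false ∧
      k ^ 3 + 1 ≤ wcW k d.fst d.snd + k ^ 2 ∧ wcW k d.fst d.snd ≤ k ^ 3 ∧
      (wcW k d.fst d.snd = k ^ 3 →
        d.edge = s(WCVertex.node true false (⟨0, by omega⟩ : Fin k),
                   WCVertex.node true true (⟨0, by omega⟩ : Fin k)))) ∨
    (isInputDart k false d = false ∧ isInputDart k true d = false ∧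
      wcW k d.fst d.snd = 0) := by
  have hadj := d.adj
  have he : d.edge = s(d.toProd.1, d.toProd.2) := rfl
  simp only [wcGraph, SimpleGraph.fromRel_adj, wcRel] at hadj
  obtain ⟨-, hrel | hrel⟩ := hadj <;>
    rcases hrel with ⟨s, l, i, h1, h2⟩ | ⟨l, h1, h2⟩ | ⟨i, j, -, h1, h2⟩ | ⟨i, j, -, h1, h2⟩
  -- forward cases
  · right; right; simp [isInputDart, wcW, wcW0, h1, h2]
  · right; right; simp [isInputDart, wcW, wcW0, h1, h2]
  · left
    have hij := wc_fin_bound hk i j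
    have hpow : k ^ 2 ≤ k ^ 3 := Nat.pow_le_pow_right (by omega) (by omega)
    refine ⟨by simp [isInputDart, h1, h2], by simp [isInputDart, h1, h2], ?_, ?_, ?_⟩
    · simp only [wcW, wcW0, h1, h2]; omega
    · simp only [wcW, wcW0, h1, h2]; omega
    · intro hw
      simp only [wcW, wcW0, h1, h2] at hw
      have hj : j.val = 0 ∧ k * i.val = 0 := by omega
      have hi : i.val = 0 := by
        rcases Nat.mul_eq_zero.mp hj.2 with h | h
        · omega
        · exact h
      have hi' : i = (⟨0, by omega⟩ : Fin k) := Fin.ext hi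
      have hj' : j = (⟨0, by omega⟩ : Fin k) := Fin.ext hj.1
      rw [he, h1, h2, hi', hj']
  · right; left
    have hij := wc_fin_bound hk i j
    have hpow : k ^ 2 ≤ k ^ 3 := Nat.pow_le_pow_right (by omega) (by omega)
    refine ⟨by simp [isInputDart, h1, h2], by simp [isInputDart, h1, h2], ?_, ?_, ?_⟩
    · simp only [wcW, wcW0, h1, h2]; omega
    · simp only [wcW, wcW0, h1, h2]; omega
    · intro hw
      simp only [wcW, wcW0, h1, h2] at hw
      have hj : k * i.val + j.val = 0 := by omega
      have hi : i.val = 0 := by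
        rcases Nat.mul_eq_zero.mp (show k * i.val = 0 by omega) with h | h
        · omega
        · exact h
      have hi' : i = (⟨0, by omega⟩ : Fin k) := Fin.ext hi
      have hj' : j = (⟨0, by omega⟩ : Fin k) := Fin.ext (by omega)
      rw [he, h1, h2, hi', hj']
  -- reversed cases
  · right; right; simp [isInputDart, wcW, wcW0, h1, h2]
  · right; right; simp [isInputDart, wcW, wcW0, h1, h2]
  · left
    have hij := wc_fin_bound hk i j
    have hpow : k ^ 2 ≤ k ^ 3 := Nat.pow_le_pow_right (by omega) (by omega)
    refine ⟨by simp [isInputDart, h1, h2], by simp [isInputDart, h1, h2], ?_, ?_, ?_⟩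
    · simp only [wcW, wcW0, h1, h2]; omega
    · simp only [wcW, wcW0, h1, h2]; omega
    · intro hw
      simp only [wcW, wcW0, h1, h2] at hw
      have hj : j.val = 0 ∧ k * i.val = 0 := by omega
      have hi : i.val = 0 := by
        rcases Nat.mul_eq_zero.mp hj.2 with h | h
        · omega
        · exact h
      have hi' : i = (⟨0, by omega⟩ : Fin k) := Fin.ext hi
      have hj' : j = (⟨0, by omega⟩ : Fin k) := Fin.ext hj.1
      rw [he, h1, h2, hi', hj', Sym2.eq_swap]
  · right; left
    have hij := wc_fin_bound hk i j
    have hpow : k ^ 2 ≤ k ^ 3 := Nat.pow_le_pow_right (by omega) (by omega)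
    refine ⟨by simp [isInputDart, h1, h2], by simp [isInputDart, h1, h2], ?_, ?_, ?_⟩
    · simp only [wcW, wcW0, h1, h2]; omega
    · simp only [wcW, wcW0, h1, h2]; omega
    · intro hw
      simp only [wcW, wcW0, h1, h2] at hw
      have hj : k * i.val + j.val = 0 := by omega
      have hi : i.val = 0 := by
        rcases Nat.mul_eq_zero.mp (show k * i.val = 0 by omega) with h | h
        · omega
        · exact h
      have hi' : i = (⟨0, by omega⟩ : Fin k) := Fin.ext hi
      have hj' : j = (⟨0, by omega⟩ : Fin k) := Fin.ext (by omega)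
      rw [he, h1, h2, hi', hj', Sym2.eq_swap]

lemma wc_sum_filter {α : Type*} (P : α → Bool) (w : α → ℕ)
    (h : ∀ a, P a = false → w a = 0) :
    ∀ l : List α, ((l.filter P).map w).sum = (l.map w).sum := by
  intro l
  induction l with
  | nil => rfl
  | cons a l ih =>
    by_cases ha : P a = true
    · simp [List.filter_cons, ha, ih]
    · simp only [Bool.not_eq_true] at ha
      simp [List.filter_cons, ha, ih, h a ha]

lemma wc_countP_filter {α : Type*} (q P : α → Bool)
    (h : ∀ a, q a = true → P a = true) :
    ∀ l : List α, (l.filter P).countP q = l.countP q := by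
  intro l
  induction l with
  | nil => rfl
  | cons a l ih =>
    by_cases hq : q a = true
    · simp [List.filter_cons, h a hq, List.countP_cons, hq, ih]
    · simp only [Bool.not_eq_true] at hq
      by_cases hPa : P a = true
      · simp [List.filter_cons, hPa, List.countP_cons, hq, ih]
      · simp only [Bool.not_eq_true] at hPa
        simp [List.filter_cons, hPa, List.countP_cons, hq, ih]

/-- in the weighted-cycle lower-bound graph `G_{x,y}` (`k ≥ 3`),
every simple cycle of total weight `2k³` contains exactly one edge joining `A_1`
and `A_2` and exactly one edge joining `B_1` and `B_2` (and hence exactly two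
input-dependent edges). -/
theorem wcGraph_cycle_two_input_edges (k : ℕ) (hk : 3 ≤ k)
    (x y : Fin k → Fin k → Bool) (v : WCVertex k)
    (p : (wcGraph k x y).Walk v v) (hp : p.IsCycle)
    (hw : walkWeight p = 2 * k ^ 3) :
    p.darts.countP (isInputDart k false) = 1 ∧
    p.darts.countP (isInputDart k true) = 1 := by
  classical
  have hpow : k ^ 2 ≤ k ^ 3 := Nat.pow_le_pow_right (by omega) (by omega)
  have hk2 : 9 ≤ k ^ 2 := by calc (9:ℕ) = 3 ^ 2 := by norm_num
                                 _ ≤ k ^ 2 := Nat.pow_le_pow_left hk 2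
  have h3k : 3 * k ^ 2 ≤ k ^ 3 := by
    have e : k ^ 3 = k * k ^ 2 := by ring
    rw [e]
    exact Nat.mul_le_mul_right _ hk
  set P : (wcGraph k x y).Dart → Bool :=
    fun d => isInputDart k false d || isInputDart k true d with hP
  have hzero : ∀ d, P d = false → wcW k d.fst d.snd = 0 := by
    intro d hd
    rcases wc_dart_class hk d with ⟨h1, -⟩ | ⟨h1, -⟩ | ⟨-, -, h3⟩
    · simp [hP, h1] at hd
    · simp [hP, h1] at hd
    · exact h3
  have hsum : ((p.darts.filter P).map (fun d => wcW k d.fst d.snd)).sum = 2 * k ^ 3 := by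
    rw [wc_sum_filter P _ hzero]; exact hw
  have hcf : (p.darts.filter P).countP (isInputDart k false)
      = p.darts.countP (isInputDart k false) :=
    wc_countP_filter _ _ (by intro a h; simp [hP, h]) _
  have hct : (p.darts.filter P).countP (isInputDart k true)
      = p.darts.countP (isInputDart k true) :=
    wc_countP_filter _ _ (by intro a h; simp [hP, h]) _
  have hmemP : ∀ d ∈ p.darts.filter P, P d = true := fun d hd => (List.mem_filter.mp hd).2
  have hedgend : ((p.darts.filter P).map SimpleGraph.Dart.edge).Nodup := by
    have h1 := List.filter_sublist (l := p.darts) (p := P)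
    have h3 : (p.darts.map SimpleGraph.Dart.edge).Nodup := hp.edges_nodup
    exact (h1.map SimpleGraph.Dart.edge).nodup h3
  -- per-element bounds
  have hbnd : ∀ d, P d = true → k ^ 3 + 1 ≤ wcW k d.fst d.snd + k ^ 2 ∧
      wcW k d.fst d.snd + 1 ≤ k ^ 3 + k ^ 2 := by
    intro d hd
    rcases wc_dart_class hk d with ⟨-, -, hlo, hhi, -⟩ | ⟨-, -, hlo, hhi, -⟩ | ⟨h1, h2, -⟩
    · constructor <;> omega
    · constructor <;> omega
    · rw [hP] at hd; simp [h1, h2] at hd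
  rcases hFl : p.darts.filter P with - | ⟨d1, - | ⟨d2, - | ⟨d3, t⟩⟩⟩
  · rw [hFl] at hsum; simp at hsum; omega
  · rw [hFl] at hsum
    have hb := hbnd d1 (hmemP d1 (by rw [hFl]; simp))
    simp at hsum
    omega
  · -- main case: exactly two input darts
    rw [hFl] at hsum hcf hct hedgend
    have hP1 : P d1 = true := hmemP d1 (by rw [hFl]; simp)
    have hP2 : P d2 = true := hmemP d2 (by rw [hFl]; simp)
    simp only [List.map_cons, List.map_nil, List.sum_cons, List.sum_nil, Nat.add_zero] at hsum
    have hne : d1.edge ≠ d2.edge := by simpa using hedgend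
    rw [← hcf, ← hct]
    rcases wc_dart_class hk d1 with ⟨hf1, ht1, hlo1, hhi1, heq1⟩ | ⟨ht1, hf1, hlo1, hhi1, heq1⟩ | ⟨hf1, ht1, hz1⟩ <;>
      rcases wc_dart_class hk d2 with ⟨hf2, ht2, hlo2, hhi2, heq2⟩ | ⟨ht2, hf2, hlo2, hhi2, heq2⟩ | ⟨hf2, ht2, hz2⟩
    · exact absurd ((heq1 (by omega)).trans (heq2 (by omega)).symm) hne
    · constructor <;> simp [List.countP_cons, hf1, hf2, ht1, ht2]
    · rw [hP] at hP2; simp [hf2, ht2] at hP2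
    · constructor <;> simp [List.countP_cons, hf1, hf2, ht1, ht2]
    · exact absurd ((heq1 (by omega)).trans (heq2 (by omega)).symm) hne
    · rw [hP] at hP2; simp [hf2, ht2] at hP2
    · rw [hP] at hP1; simp [hf1, ht1] at hP1
    · rw [hP] at hP1; simp [hf1, ht1] at hP1
    · rw [hP] at hP1; simp [hf1, ht1] at hP1
  · -- three or more input darts: weight too large
    rw [hFl] at hsum
    have hb1 := hbnd d1 (hmemP d1 (by rw [hFl]; simp))
    have hb2 := hbnd d2 (hmemP d2 (by rw [hFl]; simp))
    have hb3 := hbnd d3 (hmemP d3 (by rw [hFl]; simp))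
    simp only [List.map_cons, List.sum_cons] at hsum
    omega
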